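/- Let Γ be the Petersen graph realized as the Kneser graph KG_{5,2}. Every graph homomorphism from Γ to itself is a graph automorphism; that is, if f : V(Γ) → V(Γ) satisfies f(u) ∼ f(v) whenever u ∼ v, then f is a bijection and f(u) ∼ f(v) if and only if u ∼ v. -/

import Mathlib

noncomputable section

/-- Vertices of the Kneser graph `KG_{5,2}`: the 2-element subsets of `{1,…,5}`. -/
abbrev KVertex : Type := {s : Finset (Fin 5) // s.card = 2}

/-- The Petersen graph, realized as the Kneser graph `KG_{5,2}`:
two 2-element subsets are adjacent iff they are disjoint. -/
def petersen : SimpleGraph KVertex where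
  Adj u v := Disjoint u.1 v.1
  symm := ⟨fun _ _ h => h.symm⟩
  loopless := by
    constructor
    intro v h
    have hv := v.2
    rw [disjoint_self.mp h] at hv
    simp at hv

instance : DecidableRel petersen.Adj := fun u v =>
  inferInstanceAs (Decidable (Disjoint u.1 v.1))

/-- The Petersen graph is triangle-free. -/
lemma petersen_tf : ∀ a b c : KVertex, petersen.Adj a b → petersen.Adj b c →
    ¬ petersen.Adj a c := by
  decide

/-- Any two distinct nonadjacent vertices of the Petersen graph lie on a 5-cycle. -/
lemma petersen_pentagon : ∀ u v : KVertex, u ≠ v → ¬ petersen.Adj u v →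
    ∃ w x y : KVertex, petersen.Adj u w ∧ petersen.Adj w v ∧ petersen.Adj v x ∧
      petersen.Adj x y ∧ petersen.Adj y u := by
  decide

/-- Every graph homomorphism from the Petersen graph to itself is a
graph automorphism: if `f : V(Γ) → V(Γ)` sends adjacent pairs to adjacent pairs, then
`f` is a bijection and `f(u) ∼ f(v)` if and only if `u ∼ v`. -/
theorem petersen_hom_is_aut (f : KVertex → KVertex)
    (hf : ∀ u v : KVertex, petersen.Adj u v → petersen.Adj (f u) (f v)) :
    Function.Bijective f ∧
    (∀ u v : KVertex, petersen.Adj (f u) (f v) ↔ petersen.Adj u v) := by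
  have hinj : Function.Injective f := by
    intro u v huv
    by_contra hne
    by_cases hadj : petersen.Adj u v
    · exact petersen.loopless.irrefl (f v) (huv ▸ hf u v hadj)
    · obtain ⟨w, x, y, h1, h2, h3, h4, h5⟩ := petersen_pentagon u v hne hadj
      exact petersen_tf (f v) (f x) (f y) (hf v x h3) (hf x y h4)
        ((huv ▸ hf y u h5).symm)
  have hbij : Function.Bijective f := Finite.injective_iff_bijective.mp hinj
  refine ⟨hbij, fun u v => ⟨?_, hf u v⟩⟩
  intro hfu
  set e : Equiv.Perm KVertex := Equiv.ofBijective f hbij with he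
  have hiter : ∀ (k : ℕ) (a b : KVertex), petersen.Adj a b →
      petersen.Adj (f^[k] a) (f^[k] b) := by
    intro k
    induction k with
    | zero => intro a b h; simpa using h
    | succ n ih =>
      intro a b h
      rw [Function.iterate_succ_apply', Function.iterate_succ_apply']
      exact hf _ _ (ih a b h)
  have hek : ∀ (k : ℕ) (x : KVertex), (e ^ k) x = f^[k] x := by
    intro k
    induction k with
    | zero => intro x; simp
    | succ n ih =>
      intro x
      rw [pow_succ, Function.iterate_succ_apply']
      simp only [Equiv.Perm.mul_apply, ih, he, Equiv.ofBijective_apply]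
      rw [← he, ih, Function.Commute.iterate_self f n x]
  have hpos : 0 < orderOf e := orderOf_pos e
  have hid : ∀ x : KVertex, f^[orderOf e] x = x := by
    intro x
    rw [← hek]
    rw [pow_orderOf_eq_one e]
    rfl
  have key := hiter (orderOf e - 1) (f u) (f v) hfu
  have hcomp : ∀ x : KVertex, f^[orderOf e - 1] (f x) = x := by
    intro x
    rw [← Function.iterate_succ_apply]
    have : (orderOf e - 1) + 1 = orderOf e := Nat.succ_pred_eq_of_pos hpos
    rw [Nat.succ_eq_add_one, this]
    exact hid x
  rwa [hcomp u, hcomp v] at key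

end
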